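/- (Gaudin Hamiltonian symmetry under duality, commutative shadow.) Define for a ∈ {1,…,N} the operator H_a = Σ_{b≠a} Ω^{(ab)}/(z_a − z_b) + Σ_{b=1}^M λ_b E_{bb}^{(a)} acting on ℂ[x_{ij}], where E_{ij}^{(a)} = x_{ia}∂_{ja} and Ω^{(ab)} = Σ_{i,j=1}^M E_{ij}^{(a)} E_{ji}^{(b)}; and define for a ∈ {1,…,M} the dual dynamical Hamiltonian H^∨_a = Σ_{b≠a} ((Σ_i E_{ab}^{(i)})(Σ_i E_{ba}^{(i)}) − Σ_i E_{aa}^{(i)})/(λ_a − λ_b) + Σ_{b=1}^N z_b E_{aa}^{(b)}. Then with the gl_N operators F_{ij}^{(a)} = x_{ai}∂_{aj}, the gl_N Gaudin Hamiltonian built from F with parameters (λ, z) swapped equals H^∨: namely, for each a ∈ {1,…,M}, Σ_{b≠a} (Σ_{i,j=1}^N F_{ij}^{(a)}F_{ji}^{(b)})/(λ_a − λ_b) + Σ_{b=1}^N z_b F_{bb}^{(a)} = H^∨_a as operators on ℂ[x_{ij} : 1≤i≤M, 1≤j≤N]. -/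

import Mathlib

open scoped BigOperators

/-- The `gl_M` generators `E_{ij}^{(a)} = x_{ia}∂_{ja}` acting on
`ℂ[x_{ij} : 1 ≤ i ≤ M, 1 ≤ j ≤ N]`. -/
noncomputable def Eop (M N : ℕ) (i j : Fin M) (a : Fin N) :
    Module.End ℂ (MvPolynomial (Fin M × Fin N) ℂ) :=
  LinearMap.mulLeft ℂ (MvPolynomial.X (i, a)) * (MvPolynomial.pderiv (j, a)).toLinearMap

/-- The `gl_N` generators `F_{ij}^{(a)} = x_{ai}∂_{aj}` acting on
`ℂ[x_{ij} : 1 ≤ i ≤ M, 1 ≤ j ≤ N]`. -/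
noncomputable def Fop (M N : ℕ) (i j : Fin N) (a : Fin M) :
    Module.End ℂ (MvPolynomial (Fin M × Fin N) ℂ) :=
  LinearMap.mulLeft ℂ (MvPolynomial.X (a, i)) * (MvPolynomial.pderiv (a, j)).toLinearMap

section Aux

variable {σ : Type*} [DecidableEq σ]

lemma pderiv_comm_aux (s t : σ) (p : MvPolynomial σ ℂ) :
    MvPolynomial.pderiv s (MvPolynomial.pderiv t p)
      = MvPolynomial.pderiv t (MvPolynomial.pderiv s p) := by
  induction p using MvPolynomial.induction_on with
  | C c => simp
  | add p q hp hq => simp [hp, hq]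
  | mul_X p i hp =>
      have h0 : ∀ u v : σ,
          MvPolynomial.pderiv u (MvPolynomial.pderiv v (MvPolynomial.X i : MvPolynomial σ ℂ)) = 0 := by
        intro u v
        rcases eq_or_ne v i with h | h
        · subst h; simp [MvPolynomial.pderiv_X_self]
        · rw [MvPolynomial.pderiv_X_of_ne (Ne.symm h)]; simp
      simp only [MvPolynomial.pderiv_mul, map_add, MvPolynomial.pderiv_mul, hp, h0, mul_zero,
        add_zero]
      ring

/-- `[∂_s, X_t] = δ_{st}` as endomorphisms. -/
lemma pderiv_mulLeft_X (s t : σ) :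
    (MvPolynomial.pderiv s).toLinearMap * LinearMap.mulLeft ℂ (MvPolynomial.X t)
      = LinearMap.mulLeft ℂ (MvPolynomial.X t) * (MvPolynomial.pderiv s).toLinearMap
        + (if s = t then 1 else 0) := by
  refine LinearMap.ext fun p => ?_
  rcases eq_or_ne s t with h | h
  · subst h
    simp [Module.End.mul_apply, MvPolynomial.pderiv_mul, MvPolynomial.pderiv_X_self]
  · simp [Module.End.mul_apply, MvPolynomial.pderiv_mul,
      MvPolynomial.pderiv_X_of_ne (Ne.symm h), h]

lemma pderiv_pderiv_endo (s t : σ) :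
    (MvPolynomial.pderiv s).toLinearMap * (MvPolynomial.pderiv t).toLinearMap
      = ((MvPolynomial.pderiv t).toLinearMap * (MvPolynomial.pderiv s).toLinearMap
        : Module.End ℂ (MvPolynomial σ ℂ)) :=
  LinearMap.ext fun p => pderiv_comm_aux s t p

lemma endo_key {R : Type*} [Ring R] (A B Da Db e : R)
    (h1 : Db * B = B * Db + e) (h2 : Da * B = B * Da) (h3 : Db * Da = Da * Db) :
    A * Db * (B * Da) = A * Da * (B * Db) + A * e * Da := by
  calc A * Db * (B * Da) = A * (Db * B) * Da := by noncomm_ring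
    _ = A * (B * Db + e) * Da := by rw [h1]
    _ = A * B * (Db * Da) + A * e * Da := by noncomm_ring
    _ = A * B * (Da * Db) + A * e * Da := by rw [h3]
    _ = A * (Da * B) * Db + A * e * Da := by rw [h2]; noncomm_ring
    _ = A * Da * (B * Db) + A * e * Da := by noncomm_ring

end Aux

lemma key_identity {M N : ℕ} (a b : Fin M) (hab : a ≠ b) (i j : Fin N) :
    Eop M N a b i * Eop M N b a j
      = Fop M N i j a * Fop M N j i b + (if i = j then Eop M N a a i else 0) := by
  have haj : ((a, j) : Fin M × Fin N) ≠ (b, j) := by simp [hab]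
  have h1 : (MvPolynomial.pderiv ((b, i) : Fin M × Fin N)).toLinearMap
        * LinearMap.mulLeft ℂ (MvPolynomial.X (b, j))
      = LinearMap.mulLeft ℂ (MvPolynomial.X (b, j)) * (MvPolynomial.pderiv (b, i)).toLinearMap
        + (if i = j then 1 else 0) := by
    have h := pderiv_mulLeft_X (σ := Fin M × Fin N) (b, i) (b, j)
    simpa [Prod.ext_iff] using h
  have h2 : (MvPolynomial.pderiv ((a, j) : Fin M × Fin N)).toLinearMap
        * LinearMap.mulLeft ℂ (MvPolynomial.X (b, j))
      = LinearMap.mulLeft ℂ (MvPolynomial.X (b, j)) * (MvPolynomial.pderiv (a, j)).toLinearMap := by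
    rw [pderiv_mulLeft_X, if_neg haj, add_zero]
  have h3 := pderiv_pderiv_endo (σ := Fin M × Fin N) (b, i) (a, j)
  unfold Eop Fop
  rw [endo_key _ _ _ _ _ h1 h2 h3]
  congr 1
  rcases eq_or_ne i j with h | h
  · subst h; simp
  · simp [h]

/-- Interchange of Gaudin and dynamical Hamiltonians under `(gl_M, gl_N)`
duality: for each `a ∈ {1,…,M}`, the `gl_N` Gaudin Hamiltonian (built from the
`F`'s, with parameters `(λ, z)`) equals the `gl_M` dynamical Hamiltonian
`H^∨_a` (built from the `E`'s), as operators on `ℂ[x_{ij}]`. -/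
theorem gaudin_dynamical_interchange {M N : ℕ}
    (z : Fin N → ℂ) (lam : Fin M → ℂ)
    (hz : Function.Injective z) (hlam : Function.Injective lam) (a : Fin M) :
    (∑ b ∈ Finset.univ.erase a,
        (lam a - lam b)⁻¹ • (∑ i : Fin N, ∑ j : Fin N, Fop M N i j a * Fop M N j i b))
      + ∑ b : Fin N, z b • Fop M N b b a =
    (∑ b ∈ Finset.univ.erase a,
        (lam a - lam b)⁻¹ •
          ((∑ i : Fin N, Eop M N a b i) * (∑ i : Fin N, Eop M N b a i)
            - ∑ i : Fin N, Eop M N a a i))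
      + ∑ b : Fin N, z b • Eop M N a a b := by
  have hEF : ∀ b : Fin N, Fop M N b b a = Eop M N a a b := fun b => rfl
  refine congrArg₂ (· + ·) (Finset.sum_congr rfl fun b hb => ?_)
    (Finset.sum_congr rfl fun b _ => by rw [hEF])
  have hba : a ≠ b := (Finset.ne_of_mem_erase hb).symm
  congr 1
  rw [Finset.sum_mul_sum, eq_sub_iff_add_eq, ← Finset.sum_add_distrib]
  refine Finset.sum_congr rfl fun i _ => ?_
  calc (∑ j : Fin N, Fop M N i j a * Fop M N j i b) + Eop M N a a i
      = ∑ j : Fin N, (Fop M N i j a * Fop M N j i b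
          + (if i = j then Eop M N a a i else 0)) := by
        rw [Finset.sum_add_distrib, Finset.sum_ite_eq Finset.univ i (fun _ => Eop M N a a i)]
        simp
    _ = ∑ j : Fin N, Eop M N a b i * Eop M N b a j :=
        Finset.sum_congr rfl fun j _ => (key_identity a b hba i j).symm
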